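/- For all real α > 0 with α ≠ 1, we have ζ(α) > 1/(α−1) and ζ(α)·(α−1) > 0. -/

import Mathlib

open Complex Real Filter

noncomputable def gz (n : ℕ) (z : ℂ) : ℂ :=
  (((n:ℝ)+1 : ℝ) : ℂ) ^ (-z) -
    ((((n:ℝ)+2 : ℝ) : ℂ) ^ (1-z) - (((n:ℝ)+1 : ℝ) : ℂ) ^ (1-z)) / (1-z)

lemma gz_eq_integral (n : ℕ) {z : ℂ} (hz1 : z ≠ 1) :
    gz n z = ∫ x in ((n:ℝ)+1)..((n:ℝ)+2),
      ((((n:ℝ)+1 : ℝ) : ℂ) ^ (-z) - (x : ℂ) ^ (-z)) := by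
  have h0 : (0:ℝ) ∉ Set.uIcc ((n:ℝ)+1) ((n:ℝ)+2) := by
    rw [Set.uIcc_of_le (by linarith)]
    intro h
    rw [Set.mem_Icc] at h
    have h1 := h.1
    have : (0:ℝ) ≤ n := Nat.cast_nonneg n
    linarith
  rw [intervalIntegral.integral_sub intervalIntegrable_const
    (intervalIntegral.intervalIntegrable_cpow (Or.inr h0)),
    intervalIntegral.integral_const,
    integral_cpow (Or.inr ⟨fun h => hz1 (neg_inj.mp h), h0⟩)]
  have h2 : ((n:ℝ)+2) - ((n:ℝ)+1) = 1 := by ring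
  rw [h2, one_smul]
  have h1 : -z + 1 = 1 - z := by ring
  rw [h1]
  unfold gz
  ring

lemma cpow_deriv {z : ℂ} (hz : z ≠ 0) {y : ℝ} (hy : 0 < y) :
    HasDerivAt (fun x : ℝ => (x : ℂ) ^ (-z)) (-z * (y : ℂ) ^ (-z-1)) y := by
  have hr : -z - 1 ≠ -1 := by
    intro h; apply hz; linear_combination -h
  have h := (hasDerivAt_ofReal_cpow_const' (ne_of_gt hy) hr).const_mul (-z-1+1)
  have he : (fun x : ℝ => (-z-1+1) * ((x:ℂ) ^ (-z-1+1) / (-z-1+1))) =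
      fun x : ℝ => (x : ℂ) ^ (-z) := by
    funext x
    rw [mul_div_cancel₀]
    · norm_num
    · intro h; apply hz; linear_combination -h
  rw [he] at h
  have : (-z-1+1) * (y:ℂ) ^ (-z-1) = -z * (y:ℂ) ^ (-z-1) := by ring
  rwa [this] at h

lemma norm_gz_le (n : ℕ) {z : ℂ} (hz : 0 < z.re) (hz1 : z ≠ 1) :
    ‖gz n z‖ ≤ ‖z‖ * ((n:ℝ)+1) ^ (-z.re - 1) := by
  set a : ℝ := (n:ℝ)+1 with ha
  have ha1 : (1:ℝ) ≤ a := by simp [ha]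
  have ha0 : (0:ℝ) < a := by linarith
  set C : ℝ := ‖z‖ * a ^ (-z.re - 1) with hC
  have hC0 : 0 ≤ C := by positivity
  have hz0 : z ≠ 0 := fun h => by simp [h] at hz
  -- derivative bound on Icc a (a+1)
  have key : ∀ x ∈ Set.Icc a (a+1),
      ‖((a : ℝ) : ℂ) ^ (-z) - (x : ℂ) ^ (-z)‖ ≤ C * ‖a - x‖ := by
    intro x hx
    refine (convex_Icc a (a+1)).norm_image_sub_le_of_norm_hasDerivWithin_le
      (f := fun x : ℝ => (x : ℂ) ^ (-z)) (f' := fun y => -z * (y : ℂ) ^ (-z-1))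
      (fun y hy => (cpow_deriv hz0 (by linarith [hy.1] : (0:ℝ) < y)).hasDerivWithinAt)
      (fun y hy => ?_) hx (Set.left_mem_Icc.mpr (by linarith))
    have hy0 : (0:ℝ) < y := by linarith [hy.1]
    rw [norm_mul, norm_neg]
    have hnorm : ‖(y:ℂ) ^ (-z-1)‖ = y ^ (-z.re-1) := by
      rw [Complex.norm_cpow_eq_rpow_re_of_pos hy0]
      norm_num
    rw [hnorm, hC]
    have : y ^ (-z.re-1) ≤ a ^ (-z.re-1) :=
      Real.rpow_le_rpow_of_nonpos ha0 hy.1 (by linarith)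
    exact mul_le_mul_of_nonneg_left this (norm_nonneg z)
  rw [gz_eq_integral n hz1,
    show ((n:ℝ)+2) = a + 1 from by rw [ha]; ring,
    show ((n:ℝ)+1) = a from ha.symm]
  have hle : a ≤ a + 1 := by linarith
  have hb := intervalIntegral.norm_integral_le_of_norm_le_const
    (C := C) (a := a) (b := a+1)
    (f := fun x : ℝ => ((a : ℝ) : ℂ) ^ (-z) - (x : ℂ) ^ (-z)) ?_
  · have h2 : a + 1 - a = 1 := by ring
    simpa [h2] using hb
  · intro x hx
    rw [Set.uIoc_of_le hle] at hx
    have hxm : x ∈ Set.Icc a (a+1) := ⟨le_of_lt hx.1, hx.2⟩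
    calc ‖((a : ℝ) : ℂ) ^ (-z) - (x : ℂ) ^ (-z)‖ ≤ C * ‖a - x‖ := key x hxm
    _ ≤ C * 1 := by
        refine mul_le_mul_of_nonneg_left ?_ hC0
        rw [Real.norm_eq_abs, abs_le]
        have h1 := hx.1
        have h2 := hx.2
        constructor
        · linarith
        · linarith
    _ = C := mul_one C

lemma summable_aux {c : ℝ} (hc : c < -1) :
    Summable (fun n : ℕ => ((n:ℝ)+1) ^ c) := by
  have h := (Real.summable_nat_rpow (p := c)).mpr hc
  have h2 := (summable_nat_add_iff 1).mpr h
  refine h2.congr fun n => ?_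
  push_cast
  ring_nf

lemma summable_gz {z : ℂ} (hz : 0 < z.re) (hz1 : z ≠ 1) :
    Summable (fun n => gz n z) := by
  refine Summable.of_norm_bounded ((summable_aux (c := -z.re - 1) (by linarith)).mul_left ‖z‖)
    fun n => norm_gz_le n hz hz1

noncomputable def Gz (z : ℂ) : ℂ := ∑' n, gz n z

lemma hasSum_pow {z : ℂ} (hz : 1 < z.re) :
    HasSum (fun n : ℕ => (((n:ℝ)+1 : ℝ) : ℂ) ^ (-z)) (riemannZeta z) := by
  have hs : Summable (fun n : ℕ => (((n:ℝ)+1 : ℝ) : ℂ) ^ (-z)) := by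
    refine Summable.of_norm_bounded (summable_aux (c := -z.re) (by linarith)) fun n => ?_
    rw [Complex.norm_cpow_eq_rpow_re_of_pos (by positivity)]
    norm_num
  have := hs.hasSum
  rwa [show ∑' n : ℕ, (((n:ℝ)+1 : ℝ) : ℂ) ^ (-z) = riemannZeta z from ?_] at this
  rw [zeta_eq_tsum_one_div_nat_add_one_cpow hz]
  congr 1
  funext n
  rw [Complex.cpow_neg, one_div]
  norm_num

lemma zeta_eq_of_one_lt {z : ℂ} (hz : 1 < z.re) :
    riemannZeta z = Gz z + 1 / (z - 1) := by
  have hz0 : 0 < z.re := by linarith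
  have hz1 : z ≠ 1 := by
    intro h; rw [h] at hz; simp at hz
  have hz1' : z - 1 ≠ 0 := sub_ne_zero.mpr hz1
  have h1z : (1:ℂ) - z ≠ 0 := by
    intro h; apply hz1; linear_combination -h
  set f : ℕ → ℂ := fun k => (((k:ℝ)+1 : ℝ) : ℂ) ^ (1-z) with hf
  set t : ℕ → ℂ := fun n => f (n+1) - f n with ht
  have hp := hasSum_pow hz
  have hsg := summable_gz hz0 hz1
  have htg : ∀ n, t n = (1-z) * ((((n:ℝ)+1 : ℝ) : ℂ) ^ (-z) - gz n z) := by
    intro n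
    have e1 : t n = f (n+1) - f n := rfl
    have e2 : f (n+1) = (((n:ℝ)+2 : ℝ) : ℂ) ^ (1-z) := by
      rw [hf]
      norm_num
      push_cast
      ring_nf
    have e3 : f n = (((n:ℝ)+1 : ℝ) : ℂ) ^ (1-z) := rfl
    rw [e1, e2, e3]
    simp only [gz]
    field_simp
    ring
  have hst : Summable t :=
    Summable.congr (((hp.summable.sub hsg).mul_left (1-z))) fun n => (htg n).symm
  have hps : ∀ N, ∑ n ∈ Finset.range N, t n = f N - 1 := by
    intro N
    rw [ht, Finset.sum_range_sub f]
    congr 1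
    rw [hf]
    norm_num
  have hfN : Tendsto (fun N : ℕ => f N) atTop (nhds 0) := by
    rw [tendsto_zero_iff_norm_tendsto_zero]
    have hform : ∀ N : ℕ, ‖f N‖ = ((N:ℝ)+1) ^ (1 - z.re) := by
      intro N
      rw [hf, Complex.norm_cpow_eq_rpow_re_of_pos (by positivity)]
      norm_num
    simp only [hform]
    have h2 : Tendsto (fun N : ℕ => ((N:ℝ)+1)) atTop atTop :=
      tendsto_atTop_add_const_right _ _ tendsto_natCast_atTop_atTop
    have h3 := (tendsto_rpow_neg_atTop (y := z.re - 1) (by linarith)).comp h2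
    refine h3.congr fun N => ?_
    simp only [Function.comp_apply]
    norm_num
  have hsum_t : HasSum t (-1) := by
    have h1 := hst.hasSum.tendsto_sum_nat
    have h2 : Tendsto (fun N => ∑ n ∈ Finset.range N, t n) atTop (nhds (-1)) := by
      simp only [hps]
      have := hfN.sub_const 1
      simpa using this
    have := tendsto_nhds_unique h1 h2
    exact this ▸ hst.hasSum
  have hgz : ∀ n : ℕ, gz n z = (((n:ℝ)+1 : ℝ) : ℂ) ^ (-z) - t n / (1-z) := by
    intro n
    rw [htg n]
    field_simp
    ring
  have hG : Gz z = riemannZeta z - (-1) / (1-z) := by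
    rw [Gz, tsum_congr hgz, Summable.tsum_sub hp.summable (hsum_t.summable.div_const (1-z)),
      hp.tsum_eq, tsum_div_const, hsum_t.tsum_eq]
  have e : (-1 : ℂ)/(1-z) = 1/(z-1) := by
    rw [div_eq_div_iff h1z hz1']; ring
  rw [hG, e]
  ring

lemma differentiableAt_gz (n : ℕ) {z : ℂ} (hz1 : z ≠ 1) :
    DifferentiableAt ℂ (gz n) z := by
  have hb1 : ((((n:ℝ)+1 : ℝ)) : ℂ) ≠ 0 := by
    simp only [ne_eq, ofReal_eq_zero]
    positivity
  have hb2 : ((((n:ℝ)+2 : ℝ)) : ℂ) ≠ 0 := by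
    simp only [ne_eq, ofReal_eq_zero]
    positivity
  have h1 : DifferentiableAt ℂ (fun z : ℂ => (((n:ℝ)+1 : ℝ) : ℂ) ^ (-z)) z :=
    (differentiable_neg.differentiableAt).const_cpow (Or.inl hb1)
  have h2 : DifferentiableAt ℂ (fun z : ℂ => (((n:ℝ)+2 : ℝ) : ℂ) ^ (1-z)) z :=
    ((differentiable_const _).sub differentiable_id).differentiableAt.const_cpow (Or.inl hb2)
  have h3 : DifferentiableAt ℂ (fun z : ℂ => (((n:ℝ)+1 : ℝ) : ℂ) ^ (1-z)) z :=
    ((differentiable_const _).sub differentiable_id).differentiableAt.const_cpow (Or.inl hb1)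
  exact h1.sub (((h2.sub h3)).div (((differentiable_const (1:ℂ)).sub differentiable_id).differentiableAt)
    (sub_ne_zero.mpr (Ne.symm hz1)))

lemma differentiableAt_Gz {z₀ : ℂ} (hz : 0 < z₀.re) (hz1 : z₀ ≠ 1) :
    DifferentiableAt ℂ Gz z₀ := by
  set r : ℝ := min (z₀.re / 2) (dist z₀ 1) with hr
  have hd1 : 0 < dist z₀ 1 := dist_pos.mpr hz1
  have hr0 : 0 < r := lt_min (by linarith) hd1
  have hball : ∀ w ∈ Metric.ball z₀ r, 0 < w.re ∧ w ≠ 1 := by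
    intro w hw
    rw [Metric.mem_ball] at hw
    constructor
    · have h1 : |(w - z₀).re| ≤ ‖w - z₀‖ := Complex.abs_re_le_norm _
      have h2 : ‖w - z₀‖ < r := by rwa [← dist_eq_norm]
      have h3 : r ≤ z₀.re / 2 := min_le_left _ _
      have := abs_le.mp h1
      simp only [Complex.sub_re] at this
      linarith [this.1]
    · intro h
      rw [h, dist_comm] at hw
      exact absurd hw (not_lt.mpr (min_le_right (z₀.re / 2) (dist z₀ 1)))
  have hO : IsOpen (Metric.ball z₀ r) := Metric.isOpen_ball
  have hdiff : DifferentiableOn ℂ Gz (Metric.ball z₀ r) := by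
    refine differentiableOn_tsum_of_summable_norm
      (u := fun n => (‖z₀‖ + r) * ((n:ℝ)+1) ^ (-(z₀.re/2) - 1))
      (((summable_aux (by linarith : -(z₀.re/2) - 1 < -1)).mul_left _)) 
      (fun n => fun w hw => (differentiableAt_gz n (hball w hw).2).differentiableWithinAt)
      hO ?_
    intro n w hw
    obtain ⟨hwre, hw1⟩ := hball w hw
    refine le_trans (norm_gz_le n hwre hw1) ?_
    have hnormw : ‖w‖ ≤ ‖z₀‖ + r := by
      have := norm_sub_norm_le w z₀
      rw [Metric.mem_ball, dist_eq_norm] at hw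
      linarith [norm_sub_norm_le w z₀, hw.le]
    have hre : z₀.re / 2 ≤ w.re := by
      rw [Metric.mem_ball] at hw
      have h1 : |(w - z₀).re| ≤ ‖w - z₀‖ := Complex.abs_re_le_norm _
      have h2 : ‖w - z₀‖ < r := by rwa [← dist_eq_norm]
      have h3 : r ≤ z₀.re / 2 := min_le_left _ _
      have := abs_le.mp h1
      simp only [Complex.sub_re] at this
      linarith [this.1]
    have hexp : ((n:ℝ)+1) ^ (-w.re - 1) ≤ ((n:ℝ)+1) ^ (-(z₀.re/2) - 1) :=
      Real.rpow_le_rpow_of_exponent_le (by push_cast; linarith [Nat.cast_nonneg (α := ℝ) n]) (by linarith)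
    exact mul_le_mul hnormw hexp (by positivity) (by positivity)
  exact (hdiff.differentiableAt (hO.mem_nhds (Metric.mem_ball_self hr0)))

lemma preconnU : IsPreconnected {z : ℂ | 0 < z.re ∧ z ≠ 1} := by
  set A : Set ℂ := {z | 0 < z.re} ∩ {z | z.re < 1} with hA
  set B : Set ℂ := {z | 1 < z.re} with hB
  set C : Set ℂ := {z | 0 < z.re} ∩ {z | 0 < z.im} with hC
  set D : Set ℂ := {z | 0 < z.re} ∩ {z | z.im < 0} with hD
  have pA : IsPreconnected A :=
    ((convex_halfSpace_re_gt 0).inter (convex_halfSpace_re_lt 1)).isPreconnected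
  have pB : IsPreconnected B := (convex_halfSpace_re_gt 1).isPreconnected
  have pC : IsPreconnected C :=
    ((convex_halfSpace_re_gt 0).inter (convex_halfSpace_im_gt 0)).isPreconnected
  have pD : IsPreconnected D :=
    ((convex_halfSpace_re_gt 0).inter (convex_halfSpace_im_lt 0)).isPreconnected
  have pCA : IsPreconnected (C ∪ A) := by
    refine IsPreconnected.union ⟨1/2, 1/2⟩ ?_ ?_ pC pA
    · constructor <;> norm_num
    · constructor <;> norm_num
  have pCAB : IsPreconnected ((C ∪ A) ∪ B) := by
    refine IsPreconnected.union ⟨2, 1⟩ ?_ ?_ pCA pB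
    · left; constructor <;> norm_num
    · show (1:ℝ) < (2:ℝ); norm_num
  have pAll : IsPreconnected (((C ∪ A) ∪ B) ∪ D) := by
    refine IsPreconnected.union ⟨1/2, -1⟩ ?_ ?_ pCAB pD
    · left; right; constructor <;> norm_num
    · constructor <;> norm_num
  have hEq : (((C ∪ A) ∪ B) ∪ D) = {z : ℂ | 0 < z.re ∧ z ≠ 1} := by
    ext z
    simp only [hA, hB, hC, hD, Set.mem_union, Set.mem_inter_iff, Set.mem_setOf_eq, ne_eq]
    constructor
    · rintro (((⟨h1, h2⟩ | ⟨h1, h2⟩) | h) | ⟨h1, h2⟩)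
      · exact ⟨h1, fun he => by rw [he] at h2; simp at h2⟩
      · exact ⟨h1, fun he => by rw [he] at h2; simp at h2⟩
      · exact ⟨by linarith, fun he => by rw [he] at h; simp at h⟩
      · exact ⟨h1, fun he => by rw [he] at h2; simp at h2⟩
    · rintro ⟨h1, h2⟩
      rcases lt_trichotomy z.im 0 with him | him | him
      · right; exact ⟨h1, him⟩
      · rcases lt_trichotomy z.re 1 with hre | hre | hre
        · left; left; right; exact ⟨h1, hre⟩
        · exfalso; exact h2 (Complex.ext hre him)
        · left; right; exact hre
      · left; left; left; exact ⟨h1, him⟩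
  rwa [hEq] at pAll

lemma zeta_eq_main {z : ℂ} (hz : 0 < z.re) (hz1 : z ≠ 1) :
    riemannZeta z = Gz z + 1 / (z - 1) := by
  set U : Set ℂ := {z : ℂ | 0 < z.re ∧ z ≠ 1} with hU
  have hUopen : IsOpen U := by
    have : U = (Complex.re ⁻¹' Set.Ioi 0) ∩ {(1:ℂ)}ᶜ := by
      ext w; simp [hU, Set.mem_setOf_eq]
    rw [this]
    exact (Complex.continuous_re.isOpen_preimage _ isOpen_Ioi).inter isOpen_compl_singleton
  have hf : AnalyticOnNhd ℂ riemannZeta U :=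
    DifferentiableOn.analyticOnNhd
      (fun w hw => (differentiableAt_riemannZeta hw.2).differentiableWithinAt) hUopen
  have hg : AnalyticOnNhd ℂ (fun w => Gz w + 1 / (w - 1)) U := by
    refine DifferentiableOn.analyticOnNhd (fun w hw => DifferentiableAt.differentiableWithinAt ?_) hUopen
    exact (differentiableAt_Gz hw.1 hw.2).add
      (((differentiable_const (1:ℂ)).differentiableAt).div
        ((differentiable_id.sub (differentiable_const 1)).differentiableAt)
        (sub_ne_zero.mpr hw.2))
  have h2U : (2:ℂ) ∈ U := by
    constructor
    · norm_num
    · norm_num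
  have hzU : z ∈ U := ⟨hz, hz1⟩
  refine hf.eqOn_of_preconnected_of_eventuallyEq hg preconnU h2U ?_ hzU
  have hnb : {w : ℂ | 1 < w.re} ∈ nhds (2:ℂ) := by
    refine (Complex.continuous_re.isOpen_preimage _ isOpen_Ioi).mem_nhds ?_
    norm_num
  filter_upwards [hnb] with w hw using zeta_eq_of_one_lt hw

noncomputable def gr (n : ℕ) (α : ℝ) : ℝ :=
  ((n:ℝ)+1) ^ (-α) - (((n:ℝ)+2) ^ (1-α) - ((n:ℝ)+1) ^ (1-α)) / (1-α)

lemma gz_ofReal (n : ℕ) (α : ℝ) : gz n (α : ℂ) = ((gr n α : ℝ) : ℂ) := by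
  have h1 : (0:ℝ) ≤ (n:ℝ)+1 := by positivity
  have h2 : (0:ℝ) ≤ (n:ℝ)+2 := by positivity
  rw [gz, gr]
  rw [show -(α:ℂ) = ((-α : ℝ) : ℂ) by push_cast; ring,
      show (1:ℂ) - (α:ℂ) = ((1 - α : ℝ) : ℂ) by push_cast; ring,
      ← Complex.ofReal_cpow h1, ← Complex.ofReal_cpow h2, ← Complex.ofReal_cpow h1]
  push_cast
  ring

lemma gr_bounds (n : ℕ) {α : ℝ} (hα : 0 < α) (hα1 : α ≠ 1) :
    0 < gr n α ∧ gr n α ≤ ((n:ℝ)+1) ^ (-α) - ((n:ℝ)+2) ^ (-α) := by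
  set a : ℝ := (n:ℝ)+1 with ha
  have ha1 : (1:ℝ) ≤ a := by simp [ha]
  have ha0 : (0:ℝ) < a := by linarith
  have hne : (1:ℝ) - α ≠ 0 := fun h => hα1 (by linarith)
  -- MVT for f x = x ^ (1-α) on [a, a+1]
  have hmvt := exists_hasDerivAt_eq_slope (f := fun x : ℝ => x ^ (1-α))
    (f' := fun x : ℝ => (1-α) * x ^ (-α)) (a := a) (b := a+1) (by linarith)
    ?_ ?_
  · obtain ⟨c, hc, hceq⟩ := hmvt
    have hc0 : 0 < c := by linarith [hc.1]
    have hslope : ((a+1) ^ (1-α) - a ^ (1-α)) / (a + 1 - a) = (a+1) ^ (1-α) - a ^ (1-α) := by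
      norm_num
    rw [hslope] at hceq
    have hkey : ((a+1) ^ (1-α) - a ^ (1-α)) / (1-α) = c ^ (-α) := by
      rw [← hceq]
      field_simp
    have hgr : gr n α = a ^ (-α) - c ^ (-α) := by
      rw [gr, ← ha, show (n:ℝ)+2 = a+1 from by rw [ha]; ring, hkey]
    constructor
    · rw [hgr]
      have : c ^ (-α) < a ^ (-α) :=
        Real.rpow_lt_rpow_of_neg ha0 hc.1 (by linarith)
      linarith
    · rw [hgr, show (n:ℝ)+2 = a+1 from by rw [ha]; ring]
      have : (a+1) ^ (-α) ≤ c ^ (-α) :=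
        Real.rpow_le_rpow_of_nonpos hc0 hc.2.le (by linarith)
      linarith
  · -- continuity on Icc
    refine continuousOn_id.rpow_const fun x hx => Or.inl ?_
    have h1 := hx.1
    show x ≠ 0
    intro h; rw [h] at h1; linarith
  · intro x hx
    have hx0 : x ≠ 0 := by
      have := hx.1; intro h; rw [h] at this; linarith
    have h := Real.hasDerivAt_rpow_const (x := x) (p := 1-α) (Or.inl hx0)
    have he : (1-α) * x ^ (1-α-1) = (1-α) * x ^ (-α) := by
      congr 1
      ring_nf
    rwa [he] at h

lemma hasSum_telescope {α : ℝ} (hα : 0 < α) :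
    HasSum (fun n : ℕ => ((n:ℝ)+1) ^ (-α) - ((n:ℝ)+2) ^ (-α)) 1 := by
  set f : ℕ → ℝ := fun k => ((k:ℝ)+1) ^ (-α) with hf
  have hnn : ∀ n : ℕ, 0 ≤ ((n:ℝ)+1) ^ (-α) - ((n:ℝ)+2) ^ (-α) := by
    intro n
    have : ((n:ℝ)+2) ^ (-α) ≤ ((n:ℝ)+1) ^ (-α) :=
      Real.rpow_le_rpow_of_nonpos (by positivity) (by linarith) (by linarith)
    linarith
  rw [hasSum_iff_tendsto_nat_of_nonneg hnn]
  have hps : ∀ N, ∑ n ∈ Finset.range N, (((n:ℝ)+1) ^ (-α) - ((n:ℝ)+2) ^ (-α)) = 1 - f N := by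
    intro N
    have : ∀ n : ℕ, ((n:ℝ)+1) ^ (-α) - ((n:ℝ)+2) ^ (-α) = f n - f (n+1) := by
      intro n
      rw [hf]
      norm_num
      push_cast
      ring_nf
    simp_rw [this]
    rw [Finset.sum_range_sub' f]
    congr 1
    rw [hf]
    norm_num
  simp only [hps]
  have hfN : Tendsto (fun N : ℕ => f N) atTop (nhds 0) := by
    have h2 : Tendsto (fun N : ℕ => ((N:ℝ)+1)) atTop atTop :=
      tendsto_atTop_add_const_right _ _ tendsto_natCast_atTop_atTop
    have h3 := (tendsto_rpow_neg_atTop (y := α) hα).comp h2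
    exact h3.congr fun N => by simp [Function.comp_apply, hf]
  have := (tendsto_const_nhds (x := (1:ℝ))).sub hfN
  simpa using this


theorem stmt_5 (α : ℝ) (hα : 0 < α) (hα1 : α ≠ 1) :
    (riemannZeta α).re > 1 / (α - 1) ∧ (riemannZeta α).re * (α - 1) > 0 := by
  have hre : 0 < (α:ℂ).re := by simpa using hα
  have hz1 : (α:ℂ) ≠ 1 := by exact_mod_cast hα1
  have hmain := zeta_eq_main hre hz1
  have hsumgr : Summable (fun n => gr n α) :=
    Summable.of_nonneg_of_le (fun n => (gr_bounds n hα hα1).1.le)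
      (fun n => (gr_bounds n hα hα1).2) (hasSum_telescope hα).summable
  have hGz : Gz (α:ℂ) = ((∑' n, gr n α : ℝ) : ℂ) := by
    rw [Gz, tsum_congr (fun n => gz_ofReal n α), Complex.ofReal_tsum]
  set T : ℝ := ∑' n, gr n α with hT
  have hT0 : 0 < T :=
    Summable.tsum_pos hsumgr (fun n => (gr_bounds n hα hα1).1.le) 0 (gr_bounds 0 hα hα1).1
  have hT1 : T ≤ 1 := by
    have := Summable.tsum_le_tsum (fun n => (gr_bounds n hα hα1).2) hsumgr
      (hasSum_telescope hα).summable
    rwa [(hasSum_telescope hα).tsum_eq] at this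
  have hval : (riemannZeta (α:ℂ)).re = T + 1/(α-1) := by
    rw [hmain, hGz]
    have he : (1:ℂ)/((α:ℂ)-1) = ((1/(α-1) : ℝ) : ℂ) := by push_cast; ring
    rw [he, ← Complex.ofReal_add, Complex.ofReal_re]
  rw [hval]
  rcases lt_or_gt_of_ne hα1 with h | h
  · have hneg : α - 1 < 0 := by linarith
    have h1 : 1/(α-1) < 0 := div_neg_of_pos_of_neg one_pos hneg
    have h2 : (1:ℝ) < 1/(1-α) := by
      rw [lt_div_iff₀ (by linarith)]; nlinarith
    have h3 : 1/(α-1) = -(1/(1-α)) := by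
      rw [← div_neg_eq_neg_div, neg_sub]
    refine ⟨by linarith, ?_⟩
    have hsumneg : T + 1/(α-1) < 0 := by rw [h3]; linarith
    exact mul_pos_of_neg_of_neg hsumneg hneg
  · have hpos : 0 < α - 1 := by linarith
    have h1 : 0 < 1/(α-1) := by positivity
    exact ⟨by linarith, mul_pos (by linarith) hpos⟩
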